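/- (Theorem 2, plug-in achievability part.) For every ε > 0 there exists a constant C > 0 such that for all S ≥ 2 and all n ≥ C · S², the empirical (plug-in) mutual information satisfies sup over all joint pmfs P on [S]×[S] of E_{Z^n ~ P^{⊗n}}[(I(P̂_n) − I(P))²] ≤ ε, where P̂_n is the empirical joint distribution of the n samples. That is, n = O(S²) samples suffice for the empirical mutual information to be consistent, uniformly over all joint pmfs. -/

import Mathlib

/-- Shannon entropy of a pmf `P` on a finite alphabet, with natural logarithm and the
convention `0 ln 0 = 0`. -/
noncomputable def entropy {A : Type*} [Fintype A] (P : A → ℝ) : ℝ :=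
  ∑ a, -(P a * Real.log (P a))

/-- Mutual information of a joint pmf `P` on `A × B`: `I(P) = H(P1) + H(P2) − H(P)`. -/
noncomputable def mutualInfo {A B : Type*} [Fintype A] [Fintype B] (P : A × B → ℝ) : ℝ :=
  entropy (fun a => ∑ b, P (a, b)) + entropy (fun b => ∑ a, P (a, b)) - entropy P

/-- Expectation of `f(Z^n)` when `Z^n = (Z_1,…,Z_n)` is drawn i.i.d. from the pmf `P`. -/
noncomputable def expectIID {A : Type*} [Fintype A] {n : ℕ} (P : A → ℝ)
    (f : (Fin n → A) → ℝ) : ℝ :=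
  ∑ z : Fin n → A, (∏ k, P (z k)) * f z

/-- `P` is a probability mass function on the finite alphabet `A`. -/
def IsPmf {A : Type*} [Fintype A] (P : A → ℝ) : Prop :=
  (∀ a, 0 ≤ P a) ∧ ∑ a, P a = 1

/-- Empirical distribution of the sample `z = (z_1,…,z_n)`:
`P̂_n(a) = (1/n) Σ_{k=1}^n 1{z_k = a}`. -/
noncomputable def empDist {A : Type*} [Fintype A] [DecidableEq A] {n : ℕ}
    (z : Fin n → A) : A → ℝ :=
  fun a => (∑ k, if z k = a then (1 : ℝ) else 0) / n

section Lemmas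

variable {A : Type*} [Fintype A] {n : ℕ}

/-- Engine: sum over all tuples of a product of per-coordinate factors. -/
lemma engine (F : Fin n → A → ℝ) :
    ∑ z : Fin n → A, ∏ j, F j (z j) = ∏ j, ∑ a, F j a := by
  rw [Finset.prod_univ_sum, Fintype.piFinset_univ]

lemma expectIID_const (P : A → ℝ) (hP : IsPmf P) (c : ℝ) :
    expectIID P (fun _ : Fin n → A => c) = c := by
  unfold expectIID
  rw [← Finset.sum_mul, engine (fun _ a => P a)]
  simp [hP.2]

lemma expectIID_coord (P : A → ℝ) (hP : IsPmf P) (g : A → ℝ) (k : Fin n) :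
    expectIID P (fun z => g (z k)) = ∑ a, P a * g a := by
  unfold expectIID
  have h1 : ∀ z : Fin n → A, (∏ j, P (z j)) * g (z k)
      = ∏ j, (if j = k then P (z j) * g (z j) else P (z j)) := by
    intro z
    rw [show (fun j => if j = k then P (z j) * g (z j) else P (z j))
        = fun j => P (z j) * (if j = k then g (z j) else 1) by funext j; split <;> simp]
    rw [Finset.prod_mul_distrib, Finset.prod_ite_eq' Finset.univ k (fun j => g (z j))]
    simp
  simp_rw [h1]
  rw [engine (fun j a => if j = k then P a * g a else P a)]
  have : ∀ j : Fin n, (∑ a, if j = k then P a * g a else P a)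
      = if j = k then ∑ a, P a * g a else 1 := by
    intro j; split <;> simp [hP.2]
  simp_rw [this]
  rw [Finset.prod_ite_eq' Finset.univ k (fun _ => ∑ a, P a * g a)]
  simp

lemma expectIID_coord_pair (P : A → ℝ) (hP : IsPmf P) (g h : A → ℝ) {k l : Fin n}
    (hkl : k ≠ l) :
    expectIID P (fun z => g (z k) * h (z l)) = (∑ a, P a * g a) * (∑ a, P a * h a) := by
  unfold expectIID
  have h1 : ∀ z : Fin n → A, (∏ j, P (z j)) * (g (z k) * h (z l))
      = ∏ j, (if j = k then P (z j) * g (z j) else if j = l then P (z j) * h (z j) else P (z j)) := by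
    intro z
    rw [show (fun j => if j = k then P (z j) * g (z j) else if j = l then P (z j) * h (z j) else P (z j))
        = fun j => P (z j) * (if j = k then g (z j) else if j = l then h (z j) else 1) by
      funext j; split
      · simp
      · split <;> simp]
    rw [Finset.prod_mul_distrib]
    congr 1
    have hsub : ({k, l} : Finset (Fin n)) ⊆ Finset.univ := Finset.subset_univ _
    rw [← Finset.prod_subset hsub (by
      intro x _ hx
      simp only [Finset.mem_insert, Finset.mem_singleton] at hx
      push_neg at hx
      simp [hx.1, hx.2])]
    rw [Finset.prod_pair hkl]
    simp [hkl, hkl.symm]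
  simp_rw [h1]
  rw [engine (fun j a => if j = k then P a * g a else if j = l then P a * h a else P a)]
  have h2 : ∀ j : Fin n, (∑ a, if j = k then P a * g a else if j = l then P a * h a else P a)
      = if j = k then ∑ a, P a * g a else if j = l then ∑ a, P a * h a else 1 := by
    intro j; split
    · rfl
    · split
      · rfl
      · simp [hP.2]
  simp_rw [h2]
  have hsub : ({k, l} : Finset (Fin n)) ⊆ Finset.univ := Finset.subset_univ _
  rw [← Finset.prod_subset hsub (by
    intro x _ hx
    simp only [Finset.mem_insert, Finset.mem_singleton] at hx
    push_neg at hx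
    simp [hx.1, hx.2])]
  rw [Finset.prod_pair hkl]
  simp [hkl, hkl.symm]

lemma expectIID_add (P : A → ℝ) (F G : (Fin n → A) → ℝ) :
    expectIID P (fun z => F z + G z) = expectIID P F + expectIID P G := by
  simp [expectIID, mul_add, Finset.sum_add_distrib]

lemma expectIID_const_mul (P : A → ℝ) (c : ℝ) (F : (Fin n → A) → ℝ) :
    expectIID P (fun z => c * F z) = c * expectIID P F := by
  simp [expectIID, Finset.mul_sum]; congr 1; funext z; ring

lemma expectIID_sum {ι : Type*} (P : A → ℝ) (s : Finset ι) (F : ι → (Fin n → A) → ℝ) :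
    expectIID P (fun z => ∑ i ∈ s, F i z) = ∑ i ∈ s, expectIID P (F i) := by
  simp only [expectIID, Finset.mul_sum]
  rw [Finset.sum_comm]

lemma expectIID_mono (P : A → ℝ) (h0 : ∀ a, 0 ≤ P a) {F G : (Fin n → A) → ℝ}
    (h : ∀ z, (∀ k, P (z k) ≠ 0) → F z ≤ G z) : expectIID P F ≤ expectIID P G := by
  apply Finset.sum_le_sum
  intro z _
  by_cases hz : ∀ k, P (z k) ≠ 0
  · exact mul_le_mul_of_nonneg_left (h z hz) (Finset.prod_nonneg fun j _ => h0 (z j))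
  · push_neg at hz
    obtain ⟨k, hk⟩ := hz
    rw [Finset.prod_eq_zero (Finset.mem_univ k) hk]
    simp

end Lemmas

section Var
variable {A : Type*} [Fintype A] {n : ℕ}

/-- Second moment of a centered i.i.d. average. -/
lemma expectIID_avg_sq (P : A → ℝ) (hP : IsPmf P) (hn : 0 < n) (φ : A → ℝ)
    (hφ : ∑ a, P a * φ a = 0) :
    expectIID P (fun z : Fin n → A => ((1 / n : ℝ) * ∑ k, φ (z k)) ^ 2)
      = (∑ a, P a * φ a ^ 2) / n := by
  have h1 : ∀ z : Fin n → A, ((1 / n : ℝ) * ∑ k, φ (z k)) ^ 2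
      = (1 / n : ℝ)^2 * ∑ k : Fin n, ∑ l : Fin n, φ (z k) * φ (z l) := by
    intro z
    rw [mul_pow]
    congr 1
    rw [sq, Finset.sum_mul_sum]
  simp_rw [h1]
  rw [expectIID_const_mul, expectIID_sum]
  have h2 : ∀ k : Fin n, expectIID P (fun z : Fin n → A => ∑ l : Fin n, φ (z k) * φ (z l))
      = ∑ a, P a * φ a ^ 2 := by
    intro k
    rw [expectIID_sum]
    have h3 : ∀ l : Fin n, expectIID P (fun z : Fin n → A => φ (z k) * φ (z l))
        = if l = k then ∑ a, P a * φ a ^ 2 else 0 := by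
      intro l
      by_cases hlk : l = k
      · subst hlk
        rw [if_pos rfl]
        have := expectIID_coord P hP (fun a => φ a * φ a) l (n := n)
        simp only [← sq] at this
        convert this using 2
        ring
      · rw [if_neg hlk, expectIID_coord_pair P hP φ φ (Ne.symm hlk), hφ, mul_zero]
    simp_rw [h3]
    rw [Finset.sum_ite_eq' Finset.univ k]
    simp
  simp_rw [h2]
  rw [Finset.sum_const, Finset.card_univ, Fintype.card_fin]
  have hn' : (n : ℝ) ≠ 0 := Nat.cast_ne_zero.mpr hn.ne'
  field_simp
  ring

/-- Variance-type bound for the deviation of the empirical measure at one atom. -/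
lemma expectIID_emp_sq [DecidableEq A] (P : A → ℝ) (hP : IsPmf P) (hn : 0 < n) (a : A) :
    expectIID P (fun z : Fin n → A => (empDist z a - P a) ^ 2) ≤ P a / n := by
  have hn' : (n : ℝ) ≠ 0 := Nat.cast_ne_zero.mpr hn.ne'
  set φ : A → ℝ := fun b => (if b = a then (1 : ℝ) else 0) - P a with hφdef
  have hφ : ∑ b, P b * φ b = 0 := by
    simp only [hφdef, mul_sub, Finset.sum_sub_distrib, mul_ite, mul_one, mul_zero]
    rw [Finset.sum_ite_eq' Finset.univ a P, ← Finset.sum_mul, hP.2]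
    simp
  have heq : ∀ z : Fin n → A, empDist z a - P a = (1 / n : ℝ) * ∑ k, φ (z k) := by
    intro z
    simp only [hφdef, empDist, Finset.sum_sub_distrib, Finset.sum_const, Finset.card_univ,
      Fintype.card_fin, nsmul_eq_mul]
    field_simp
  simp_rw [heq]
  rw [expectIID_avg_sq P hP hn φ hφ]
  have hsum : ∑ b, P b * φ b ^ 2 = P a - P a ^ 2 := by
    have hterm : ∀ b, P b * φ b ^ 2 = (if b = a then P b else 0) * (1 - 2 * P a) + P a ^ 2 * P b := by
      intro b; by_cases hb : b = a <;> simp [hφdef, hb] <;> ring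
    simp_rw [hterm]
    rw [Finset.sum_add_distrib, ← Finset.sum_mul, ← Finset.mul_sum,
      Finset.sum_ite_eq' Finset.univ a P, hP.2]
    simp only [Finset.mem_univ, if_pos, mul_one]
    ring
  rw [hsum]
  have h0 := hP.1 a
  gcongr
  nlinarith [sq_nonneg (P a)]

end Var

open Finset
section Key
variable {A : Type*} [Fintype A]

/-- `p (log p)^2 ≤ 4` on `[0,1]`. -/
lemma mul_sq_log_le (p : ℝ) (h0 : 0 ≤ p) (h1 : p ≤ 1) : p * Real.log p ^ 2 ≤ 4 := by
  rcases eq_or_lt_of_le h0 with h | h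
  · simp [← h]
  · set u := Real.sqrt p with hu
    have hu0 : 0 < u := Real.sqrt_pos.mpr h
    have hu1 : u ≤ 1 := by
      rw [hu, show (1:ℝ) = Real.sqrt 1 by simp]
      exact Real.sqrt_le_sqrt h1
    have hlogu : Real.log p = 2 * Real.log u := by
      rw [hu, Real.log_sqrt h0]; ring
    have hup : u ^ 2 = p := Real.sq_sqrt h0
    have hlu : -Real.log u ≤ 1 / u - 1 := by
      have h := Real.log_le_sub_one_of_pos (x := 1 / u) (by positivity)
      rw [Real.log_div one_ne_zero hu0.ne', Real.log_one, zero_sub] at h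
      linarith
    have hlu2 : (u * Real.log u) ^ 2 ≤ 1 := by
      have hlneg : Real.log u ≤ 0 := Real.log_nonpos hu0.le hu1
      have h2 : u * (-Real.log u) ≤ 1 - u := by
        have := mul_le_mul_of_nonneg_left hlu hu0.le
        calc u * (-Real.log u) ≤ u * (1 / u - 1) := this
          _ = 1 - u := by field_simp
      nlinarith [mul_nonneg hu0.le (neg_nonneg.mpr hlneg)]
    calc p * Real.log p ^ 2 = 4 * (u * Real.log u) ^ 2 := by
          rw [hlogu, ← hup]; ring
      _ ≤ 4 := by nlinarith

/-- Pointwise key inequality. -/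
lemma key_pointwise (P Q : A → ℝ) (hP : IsPmf P) (hQ0 : ∀ a, 0 ≤ Q a)
    (hQ1 : ∑ a, Q a = 1) (hsupp : ∀ a, Q a ≠ 0 → P a ≠ 0) :
    (entropy Q - entropy P) ^ 2
      ≤ 8 * (∑ a, if P a = 0 then 0 else (Q a - P a) ^ 2 / P a)
        + 2 * (∑ a, (Q a - P a) * Real.log (P a)) ^ 2 := by
  set KL := ∑ a, (Q a * Real.log (Q a) - Q a * Real.log (P a)) with hKL
  set L := ∑ a, (Q a - P a) * Real.log (P a) with hL
  set X := ∑ a, (if P a = 0 then 0 else (Q a - P a) ^ 2 / P a) with hX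
  have hQP : ∀ a, P a = 0 → Q a = 0 := by
    intro a h
    by_contra hq
    exact hsupp a hq h
  -- identity
  have hid : entropy P - entropy Q = KL + L := by
    rw [entropy, entropy, hKL, hL, ← Finset.sum_add_distrib, ← Finset.sum_sub_distrib]
    apply Finset.sum_congr rfl
    intro a _
    ring
  -- KL ≥ 0
  have hKL0 : 0 ≤ KL := by
    have h1 : ∑ a, (Q a - P a) ≤ KL := by
      apply Finset.sum_le_sum
      intro a _
      rcases eq_or_lt_of_le (hQ0 a) with hq | hq
      · simp [← hq, hP.1 a]
      · have hp : 0 < P a := lt_of_le_of_ne (hP.1 a) (Ne.symm (hsupp a hq.ne'))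
        have hlog := Real.log_le_sub_one_of_pos (x := P a / Q a) (by positivity)
        rw [Real.log_div hp.ne' hq.ne'] at hlog
        have h3 : Q a * (P a / Q a) = P a := by field_simp
        nlinarith [mul_le_mul_of_nonneg_left hlog hq.le]
    rw [Finset.sum_sub_distrib, hQ1, hP.2] at h1
    simpa using h1
  -- X ≥ 0
  have hX0 : 0 ≤ X := Finset.sum_nonneg fun a _ => by
    split
    · exact le_rfl
    · exact div_nonneg (sq_nonneg _) (hP.1 a)
  -- Jensen: KL ≤ log (1 + X)
  have hjensen : KL ≤ Real.log (1 + X) := by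
    set x : A → ℝ := fun a => if Q a = 0 then 1 else Q a / P a with hx
    have hxpos : ∀ a ∈ Finset.univ (α := A), x a ∈ Set.Ioi (0:ℝ) := by
      intro a _
      by_cases hq : Q a = 0
      · simp [hx, hq]
      · have hp : 0 < P a := lt_of_le_of_ne (hP.1 a) (Ne.symm (hsupp a hq))
        have hq' : 0 < Q a := lt_of_le_of_ne (hQ0 a) (Ne.symm hq)
        simp only [hx, if_neg hq, Set.mem_Ioi]
        exact div_pos hq' hp
    have hterm : ∀ a, Q a • Real.log (x a) = Q a * Real.log (Q a) - Q a * Real.log (P a) := by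
      intro a
      by_cases hq : Q a = 0
      · simp [hx, hq]
      · have hp : P a ≠ 0 := hsupp a hq
        simp only [hx, if_neg hq, smul_eq_mul, Real.log_div hq hp]
        ring
    have hsumx : ∑ a, Q a • x a = 1 + X := by
      have hterm2 : ∀ a, Q a • x a = (if P a = 0 then 0 else (Q a - P a)^2 / P a)
          + (if P a = 0 then 0 else 2 * Q a - P a) := by
        intro a
        by_cases hp : P a = 0
        · simp [hx, hQP a hp, hp]
        · by_cases hq : Q a = 0
          · simp only [hx, hq, if_pos rfl, if_neg hp, smul_eq_mul, zero_smul]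
            field_simp
            ring
          · simp only [hx, if_neg hq, if_neg hp, smul_eq_mul]
            field_simp
            ring
      simp_rw [hterm2]
      rw [Finset.sum_add_distrib, ← hX]
      have h1 : ∑ a, (if P a = 0 then 0 else 2 * Q a - P a) = 1 := by
        have hterm3 : ∀ a, (if P a = 0 then 0 else 2 * Q a - P a) = 2 * Q a - P a := by
          intro a; by_cases hp : P a = 0
          · simp [hp, hQP a hp]
          · simp [hp]
        simp_rw [hterm3]
        rw [Finset.sum_sub_distrib, ← Finset.mul_sum, hQ1, hP.2]; ring
      rw [h1]; ring
    have hj := (strictConcaveOn_log_Ioi.concaveOn).le_map_sum (fun a _ => hQ0 a) hQ1 hxpos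
    calc KL = ∑ a, Q a • Real.log (x a) := (Finset.sum_congr rfl fun a _ => (hterm a)).symm
      _ ≤ Real.log (∑ a, Q a • x a) := hj
      _ = Real.log (1 + X) := by rw [hsumx]
  -- log(1+X) ≤ 2√X
  have hsq : KL ≤ 2 * Real.sqrt X := by
    have h1 : (1:ℝ) + X ≤ (1 + Real.sqrt X)^2 := by
      nlinarith [Real.sq_sqrt hX0, Real.sqrt_nonneg X]
    have h2 : Real.log (1 + X) ≤ Real.log ((1 + Real.sqrt X)^2) :=
      Real.log_le_log (by positivity) h1
    have h3 : Real.log (1 + Real.sqrt X) ≤ Real.sqrt X := by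
      have := Real.log_le_sub_one_of_pos (x := 1 + Real.sqrt X) (by positivity)
      linarith
    calc KL ≤ Real.log (1+X) := hjensen
      _ ≤ Real.log ((1 + Real.sqrt X)^2) := h2
      _ = 2 * Real.log (1 + Real.sqrt X) := by
          rw [Real.log_pow]; push_cast; ring
      _ ≤ 2 * Real.sqrt X := by linarith
  have hKL2 : KL^2 ≤ 4 * X := by
    nlinarith [Real.sq_sqrt hX0, Real.sqrt_nonneg X]
  have hrw : (entropy Q - entropy P)^2 = (KL + L)^2 := by
    have : entropy Q - entropy P = -(KL + L) := by linarith [hid]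
    rw [this]; ring
  rw [hrw]
  nlinarith [sq_nonneg (KL - L), hKL2]
end Key

section Master
variable {A : Type*} [Fintype A] [DecidableEq A] {n : ℕ}

lemma empDist_nonneg (z : Fin n → A) (a : A) : 0 ≤ empDist z a :=
  div_nonneg (Finset.sum_nonneg fun k _ => by split <;> norm_num) (Nat.cast_nonneg n)

lemma empDist_sum (hn : 0 < n) (z : Fin n → A) : ∑ a, empDist z a = 1 := by
  have hn' : (n:ℝ) ≠ 0 := Nat.cast_ne_zero.mpr hn.ne'
  unfold empDist
  rw [← Finset.sum_div, Finset.sum_comm]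
  have h1 : ∀ k, ∑ a, (if z k = a then (1:ℝ) else 0) = 1 := by
    intro k
    rw [Finset.sum_ite_eq Finset.univ (z k) (fun _ => (1:ℝ))]
    simp
  simp_rw [h1]
  rw [Finset.sum_const, Finset.card_univ, Fintype.card_fin, nsmul_eq_mul]
  field_simp

lemma empDist_support (z : Fin n → A) (a : A) (h : empDist z a ≠ 0) : ∃ k, z k = a := by
  by_contra hc
  push_neg at hc
  apply h
  unfold empDist
  rw [Finset.sum_eq_zero, zero_div]
  intro k _
  simp [hc k]

lemma master (P : A → ℝ) (hP : IsPmf P) (hn : 0 < n) :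
    expectIID P (fun z : Fin n → A => (entropy (empDist z) - entropy P) ^ 2)
      ≤ 16 * (Fintype.card A) / n := by
  have hn' : (n:ℝ) ≠ 0 := Nat.cast_ne_zero.mpr hn.ne'
  have hnpos : (0:ℝ) < n := by positivity
  have step1 : expectIID P (fun z : Fin n → A => (entropy (empDist z) - entropy P) ^ 2)
      ≤ expectIID P (fun z : Fin n → A =>
          8 * (∑ a, if P a = 0 then 0 else (empDist z a - P a) ^ 2 / P a)
          + 2 * (∑ a, (empDist z a - P a) * Real.log (P a)) ^ 2) := by
    apply expectIID_mono P hP.1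
    intro z hz
    apply key_pointwise P (empDist z) hP (empDist_nonneg z) (empDist_sum hn z)
    intro a hQa
    obtain ⟨k, hk⟩ := empDist_support z a hQa
    rw [← hk]
    exact hz k
  refine step1.trans ?_
  rw [expectIID_add, expectIID_const_mul, expectIID_const_mul]
  have hEX : expectIID P (fun z : Fin n → A =>
      ∑ a, if P a = 0 then 0 else (empDist z a - P a) ^ 2 / P a) ≤ Fintype.card A / n := by
    rw [expectIID_sum]
    calc ∑ a, expectIID P (fun z : Fin n → A => if P a = 0 then 0 else (empDist z a - P a) ^ 2 / P a)
        ≤ ∑ _a : A, (1:ℝ)/n := by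
          apply Finset.sum_le_sum
          intro a _
          by_cases hp : P a = 0
          · have hfun : (fun z : Fin n → A => if P a = 0 then 0 else (empDist z a - P a) ^ 2 / P a)
                = fun _ => (0:ℝ) := by
              funext z; rw [if_pos hp]
            rw [hfun, expectIID_const P hP]
            positivity
          · have hpa : 0 < P a := lt_of_le_of_ne (hP.1 a) (Ne.symm hp)
            have hfun : (fun z : Fin n → A => if P a = 0 then 0 else (empDist z a - P a) ^ 2 / P a)
                = fun z => (1 / P a) * (empDist z a - P a) ^ 2 := by
              funext z; rw [if_neg hp]; ring
            rw [hfun, expectIID_const_mul]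
            calc 1 / P a * expectIID P (fun z : Fin n → A => (empDist z a - P a) ^ 2)
                ≤ 1 / P a * (P a / n) :=
                  mul_le_mul_of_nonneg_left (expectIID_emp_sq P hP hn a) (by positivity)
              _ = 1 / n := by field_simp
      _ = Fintype.card A / n := by
          rw [Finset.sum_const, Finset.card_univ, nsmul_eq_mul]
          ring
  have hEL : expectIID P (fun z : Fin n → A =>
      (∑ a, (empDist z a - P a) * Real.log (P a)) ^ 2) ≤ 4 * Fintype.card A / n := by
    set μ := ∑ a, P a * Real.log (P a) with hμ
    set φ : A → ℝ := fun b => Real.log (P b) - μ with hφdef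
    have hφ : ∑ b, P b * φ b = 0 := by
      simp only [hφdef, mul_sub, Finset.sum_sub_distrib, ← Finset.sum_mul, hP.2, ← hμ]
      simp
    have heq : ∀ z : Fin n → A,
        ∑ a, (empDist z a - P a) * Real.log (P a) = (1/n : ℝ) * ∑ k, φ (z k) := by
      intro z
      have hL1 : ∑ a, (empDist z a - P a) * Real.log (P a)
          = (∑ a, empDist z a * Real.log (P a)) - μ := by
        rw [hμ, ← Finset.sum_sub_distrib]
        apply Finset.sum_congr rfl
        intro a _
        ring
      have hL2 : ∑ a, empDist z a * Real.log (P a) = (1/n:ℝ) * ∑ k, Real.log (P (z k)) := by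
        unfold empDist
        simp_rw [div_mul_eq_mul_div, Finset.sum_mul, ite_mul, one_mul, zero_mul]
        rw [← Finset.sum_div, Finset.sum_comm]
        have h2 : ∀ k, ∑ a, (if z k = a then Real.log (P a) else 0) = Real.log (P (z k)) := by
          intro k
          rw [Finset.sum_ite_eq Finset.univ (z k) (fun a => Real.log (P a))]
          simp
        simp_rw [h2]
      have hL3 : (1/n:ℝ) * ∑ k, φ (z k) = (1/n:ℝ) * ∑ k, Real.log (P (z k)) - μ := by
        simp only [hφdef]
        rw [Finset.sum_sub_distrib, Finset.sum_const, Finset.card_univ, Fintype.card_fin,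
          nsmul_eq_mul]
        field_simp
      rw [hL1, hL2, hL3]
    simp_rw [heq]
    rw [expectIID_avg_sq P hP hn φ hφ]
    have hb : ∑ b, P b * φ b ^ 2 ≤ 4 * Fintype.card A := by
      have h1 : ∑ b, P b * φ b ^ 2 ≤ ∑ b, P b * Real.log (P b) ^ 2 := by
        have hex : ∀ b, P b * φ b ^ 2
            = P b * Real.log (P b) ^ 2 - 2 * μ * (P b * Real.log (P b)) + μ ^ 2 * P b := by
          intro b; simp only [hφdef]; ring
        have hs : ∑ b, P b * φ b ^ 2 = (∑ b, P b * Real.log (P b) ^ 2) - μ ^ 2 := by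
          simp_rw [hex]
          rw [Finset.sum_add_distrib, Finset.sum_sub_distrib, ← Finset.mul_sum, ← Finset.mul_sum,
            ← hμ, hP.2]
          ring
        rw [hs]
        nlinarith [sq_nonneg μ]
      refine h1.trans ?_
      calc ∑ b, P b * Real.log (P b) ^ 2 ≤ ∑ _b : A, (4:ℝ) := by
            apply Finset.sum_le_sum
            intro b _
            apply mul_sq_log_le (P b) (hP.1 b)
            have hle := Finset.single_le_sum (f := P) (fun i _ => hP.1 i) (Finset.mem_univ b)
            rw [hP.2] at hle
            exact hle
        _ = 4 * Fintype.card A := by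
            rw [Finset.sum_const, Finset.card_univ, nsmul_eq_mul]
            ring
    calc (∑ b, P b * φ b ^ 2) / n ≤ (4 * Fintype.card A) / n := by gcongr
      _ = 4 * Fintype.card A / n := rfl
  calc 8 * expectIID P (fun z : Fin n → A =>
        ∑ a, if P a = 0 then 0 else (empDist z a - P a) ^ 2 / P a)
      + 2 * expectIID P (fun z : Fin n → A =>
        (∑ a, (empDist z a - P a) * Real.log (P a)) ^ 2)
      ≤ 8 * (Fintype.card A / n) + 2 * (4 * Fintype.card A / n) := by
        apply add_le_add
        · exact mul_le_mul_of_nonneg_left hEX (by norm_num)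
        · exact mul_le_mul_of_nonneg_left hEL (by norm_num)
    _ = 16 * Fintype.card A / n := by ring

end Master

section Marginal
variable {A B : Type*} [Fintype A] [Fintype B] {n : ℕ}

lemma marginal_fst_pmf (P : A × B → ℝ) (hP : IsPmf P) : IsPmf (fun a => ∑ b, P (a, b)) := by
  refine ⟨fun a => Finset.sum_nonneg fun b _ => hP.1 (a, b), ?_⟩
  rw [← Fintype.sum_prod_type]
  exact hP.2

lemma marginal_snd_pmf (P : A × B → ℝ) (hP : IsPmf P) : IsPmf (fun b => ∑ a, P (a, b)) := by
  refine ⟨fun b => Finset.sum_nonneg fun a _ => hP.1 (a, b), ?_⟩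
  rw [Finset.sum_comm, ← Fintype.sum_prod_type]
  exact hP.2

lemma expectIID_fst (P : A × B → ℝ) (F : (Fin n → A) → ℝ) :
    expectIID P (fun z : Fin n → A × B => F (fun k => (z k).1))
      = expectIID (fun a => ∑ b, P (a, b)) F := by
  unfold expectIID
  rw [← Equiv.sum_comp (Equiv.arrowProdEquivProdArrow (Fin n) (fun _ => A) (fun _ => B)).symm
    (fun z : Fin n → A × B => (∏ k, P (z k)) * F (fun k => (z k).1))]
  rw [Fintype.sum_prod_type]
  apply Finset.sum_congr rfl
  intro x _
  simp only [Equiv.arrowProdEquivProdArrow, Equiv.coe_fn_symm_mk]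
  rw [← Finset.sum_mul]
  congr 1
  exact engine (fun k b => P (x k, b))

lemma expectIID_snd (P : A × B → ℝ) (F : (Fin n → B) → ℝ) :
    expectIID P (fun z : Fin n → A × B => F (fun k => (z k).2))
      = expectIID (fun b => ∑ a, P (a, b)) F := by
  unfold expectIID
  rw [← Equiv.sum_comp (Equiv.arrowProdEquivProdArrow (Fin n) (fun _ => A) (fun _ => B)).symm
    (fun z : Fin n → A × B => (∏ k, P (z k)) * F (fun k => (z k).2))]
  rw [Fintype.sum_prod_type, Finset.sum_comm]
  apply Finset.sum_congr rfl
  intro y _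
  simp only [Equiv.arrowProdEquivProdArrow, Equiv.coe_fn_symm_mk]
  rw [← Finset.sum_mul]
  congr 1
  exact engine (fun k a => P (a, y k))

lemma empDist_fst [DecidableEq A] [DecidableEq B] (z : Fin n → A × B) (a : A) :
    ∑ b, empDist z (a, b) = empDist (fun k => (z k).1) a := by
  unfold empDist
  rw [← Finset.sum_div]
  congr 1
  rw [Finset.sum_comm]
  apply Finset.sum_congr rfl
  intro k _
  have h : ∀ w : A × B, (∑ b, if w = (a, b) then (1:ℝ) else 0) = if w.1 = a then 1 else 0 := by
    rintro ⟨u, v⟩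
    simp only [Prod.mk.injEq, ite_and]
    by_cases hu : u = a
    · simp [hu, Finset.sum_ite_eq Finset.univ v (fun _ => (1:ℝ))]
    · simp [hu]
  exact h (z k)

lemma empDist_snd [DecidableEq A] [DecidableEq B] (z : Fin n → A × B) (b : B) :
    ∑ a, empDist z (a, b) = empDist (fun k => (z k).2) b := by
  unfold empDist
  rw [← Finset.sum_div]
  congr 1
  rw [Finset.sum_comm]
  apply Finset.sum_congr rfl
  intro k _
  have h : ∀ w : A × B, (∑ a, if w = (a, b) then (1:ℝ) else 0) = if w.2 = b then 1 else 0 := by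
    rintro ⟨u, v⟩
    simp only [Prod.mk.injEq, ite_and]
    by_cases hv : v = b
    · simp [hv, Finset.sum_ite_eq Finset.univ u (fun _ => (1:ℝ))]
    · simp [hv]
  exact h (z k)

end Marginal

/-- Plug-in achievability: for every `ε > 0` there is `C > 0` such that for all `S ≥ 2` and
all `n ≥ C S²`, the empirical (plug-in) mutual information `I(P̂_n)` has worst-case mean
squared error at most `ε` over all joint pmfs on `[S] × [S]`; i.e. `n = O(S²)` samples
suffice for the empirical mutual information to be consistent, uniformly over all joint
pmfs. -/
theorem empirical_mutualInfo_achievability :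
    ∀ ε > (0 : ℝ), ∃ C > (0 : ℝ), ∀ S n : ℕ, 2 ≤ S →
      C * (S : ℝ) ^ 2 ≤ (n : ℝ) →
      (⨆ P : {P : Fin S × Fin S → ℝ // IsPmf P},
        expectIID P.1 (fun z : Fin n → Fin S × Fin S => (mutualInfo (empDist z) - mutualInfo P.1) ^ 2)) ≤ ε := by
  intro ε hε
  refine ⟨144 / ε, by positivity, ?_⟩
  intro S n hS hn
  have hS1 : (1:ℝ) ≤ (S:ℝ) := by
    have : (2:ℝ) ≤ (S:ℝ) := by exact_mod_cast hS
    linarith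
  have hnpos : (0:ℝ) < n := by
    have : (0:ℝ) < 144 / ε * (S:ℝ)^2 := by positivity
    linarith
  have hn0 : 0 < n := by exact_mod_cast hnpos
  apply Real.iSup_le _ hε.le
  rintro ⟨P, hP⟩
  have hP1 : IsPmf (fun a : Fin S => ∑ b, P (a, b)) := marginal_fst_pmf P hP
  have hP2 : IsPmf (fun b : Fin S => ∑ a, P (a, b)) := marginal_snd_pmf P hP
  set P1 : Fin S → ℝ := fun a => ∑ b, P (a, b) with hP1def
  set P2 : Fin S → ℝ := fun b => ∑ a, P (a, b) with hP2def
  have hpt : ∀ z : Fin n → Fin S × Fin S,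
      (mutualInfo (empDist z) - mutualInfo P) ^ 2
      ≤ 3 * ((entropy (empDist (fun k => (z k).1)) - entropy P1) ^ 2)
        + 3 * ((entropy (empDist (fun k => (z k).2)) - entropy P2) ^ 2)
        + 3 * ((entropy (empDist z) - entropy P) ^ 2) := by
    intro z
    have h1 : mutualInfo (empDist z) = entropy (empDist (fun k => (z k).1))
        + entropy (empDist (fun k => (z k).2)) - entropy (empDist z) := by
      unfold mutualInfo
      congr 2
      · congr 1
        funext a
        exact empDist_fst z a
      · congr 1
        funext b
        exact empDist_snd z b
    have h2 : mutualInfo P = entropy P1 + entropy P2 - entropy P := rfl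
    rw [h1, h2]
    nlinarith [sq_nonneg ((entropy (empDist (fun k => (z k).1)) - entropy P1)
        - (entropy (empDist (fun k => (z k).2)) - entropy P2)),
      sq_nonneg ((entropy (empDist (fun k => (z k).1)) - entropy P1)
        + (entropy (empDist z) - entropy P)),
      sq_nonneg ((entropy (empDist (fun k => (z k).2)) - entropy P2)
        + (entropy (empDist z) - entropy P))]
  have hm1 : expectIID P (fun z : Fin n → Fin S × Fin S =>
      (entropy (empDist (fun k => (z k).1)) - entropy P1) ^ 2) ≤ 16 * S / n := by
    have := expectIID_fst P (fun w : Fin n → Fin S => (entropy (empDist w) - entropy P1) ^ 2)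
    rw [this]
    have hm := master P1 hP1 hn0
    rwa [Fintype.card_fin] at hm
  have hm2 : expectIID P (fun z : Fin n → Fin S × Fin S =>
      (entropy (empDist (fun k => (z k).2)) - entropy P2) ^ 2) ≤ 16 * S / n := by
    have := expectIID_snd P (fun w : Fin n → Fin S => (entropy (empDist w) - entropy P2) ^ 2)
    rw [this]
    have hm := master P2 hP2 hn0
    rwa [Fintype.card_fin] at hm
  have hm3 : expectIID P (fun z : Fin n → Fin S × Fin S =>
      (entropy (empDist z) - entropy P) ^ 2) ≤ 16 * ((S:ℝ) * S) / n := by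
    have hm := master P hP hn0
    rwa [Fintype.card_prod, Fintype.card_fin, Nat.cast_mul] at hm
  have hexp : expectIID P (fun z : Fin n → Fin S × Fin S =>
      (mutualInfo (empDist z) - mutualInfo P) ^ 2)
      ≤ 3 * (16 * S / n) + 3 * (16 * S / n) + 3 * (16 * ((S:ℝ) * S) / n) := by
    calc expectIID P (fun z : Fin n → Fin S × Fin S =>
          (mutualInfo (empDist z) - mutualInfo P) ^ 2)
        ≤ expectIID P (fun z : Fin n → Fin S × Fin S =>
            3 * ((entropy (empDist (fun k => (z k).1)) - entropy P1) ^ 2)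
            + 3 * ((entropy (empDist (fun k => (z k).2)) - entropy P2) ^ 2)
            + 3 * ((entropy (empDist z) - entropy P) ^ 2)) :=
          expectIID_mono P hP.1 (fun z _ => hpt z)
      _ = 3 * expectIID P (fun z : Fin n → Fin S × Fin S =>
            (entropy (empDist (fun k => (z k).1)) - entropy P1) ^ 2)
          + 3 * expectIID P (fun z : Fin n → Fin S × Fin S =>
            (entropy (empDist (fun k => (z k).2)) - entropy P2) ^ 2)
          + 3 * expectIID P (fun z : Fin n → Fin S × Fin S =>
            (entropy (empDist z) - entropy P) ^ 2) := by
          rw [expectIID_add, expectIID_add, expectIID_const_mul, expectIID_const_mul,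
            expectIID_const_mul]
      _ ≤ 3 * (16 * S / n) + 3 * (16 * S / n) + 3 * (16 * ((S:ℝ) * S) / n) := by
          apply add_le_add (add_le_add ?_ ?_) ?_
          · exact mul_le_mul_of_nonneg_left hm1 (by norm_num)
          · exact mul_le_mul_of_nonneg_left hm2 (by norm_num)
          · exact mul_le_mul_of_nonneg_left hm3 (by norm_num)
  refine hexp.trans ?_
  have hfin : 3 * (16 * (S:ℝ) / n) + 3 * (16 * S / n) + 3 * (16 * ((S:ℝ) * S) / n)
      ≤ 144 * (S:ℝ)^2 / n := by
    have h : 3 * (16 * (S:ℝ) / n) + 3 * (16 * S / n) + 3 * (16 * ((S:ℝ) * S) / n)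
        = (96 * (S:ℝ) + 48 * ((S:ℝ) * S)) / n := by ring
    rw [h]
    gcongr
    nlinarith [hS1]
  refine hfin.trans ?_
  rw [div_le_iff₀ hnpos]
  calc 144 * (S:ℝ)^2 = ε * (144 / ε * (S:ℝ)^2) := by field_simp
    _ ≤ ε * n := mul_le_mul_of_nonneg_left hn hε.le
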